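/- arXiv:2605.00811 — 4 statements merged into one kernel-verified Lean document; each statement's English description precedes it below -/
import Mathlib

section
/- Let K be a field, q ∈ K nonzero with q^N ≠ 1 for all N ≥ 1. Define the partial order x ⊴ y iff y/x = q^{-n} for some n ≥ 0, and for x ⊴ y define I_q(x;[u_1,v_1],…,[u_k,v_k];y) = Σ over chains x ⊴ t_1 ⊴ ⋯ ⊴ t_k ⊴ y of ∏_j (t_j/(t_j−u_j) − t_j/(t_j−v_j)), assuming no t in the interval [x,y] equals any u_j or v_j. Then I_q(x;[u_1,v_1],…,[u_k,v_k];y) = I_q(x;[xy/v_k, xy/u_k],…,[xy/v_1, xy/u_1];y), provided all parameters xy/u_j, xy/v_j also avoid the interval. -/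
lemma key_frac {K : Type*} [Field K] (c t u v : K) (hc : c ≠ 0) (ht : t ≠ 0)
    (hu : u ≠ 0) (hv : v ≠ 0) (htu : t ≠ u) (htv : t ≠ v) :
    (c/t)/(c/t - c/v) - (c/t)/(c/t - c/u) = t/(t-u) - t/(t-v) := by
  have h1 : t - u ≠ 0 := sub_ne_zero.mpr htu
  have h2 : t - v ≠ 0 := sub_ne_zero.mpr htv
  have e : ∀ w : K, w ≠ 0 → t - w ≠ 0 → (c/t)/(c/t - c/w) = w/(w-t) := by
    intro w hw htw
    have hwt : w - t ≠ 0 := fun h => htw (by linear_combination -h)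
    have hnum : c * w - t * c ≠ 0 := fun h => hwt (by
      have := mul_left_cancel₀ hc (show c * (w - t) = c * 0 by ring_nf; linear_combination h)
      linear_combination this)
    rw [div_sub_div _ _ ht hw, div_div_div_eq, mul_comm]
    rw [div_eq_div_iff (mul_ne_zero ht hnum) hwt]
    ring
  have hut : u - t ≠ 0 := fun h => h1 (by linear_combination -h)
  have hvt : v - t ≠ 0 := fun h => h2 (by linear_combination -h)
  rw [e v hv h2, e u hu h1]
  rw [div_sub_div _ _ hvt hut, div_sub_div _ _ h1 h2,
    div_eq_div_iff (mul_ne_zero hvt hut) (mul_ne_zero h1 h2)]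
  ring

lemma factor_eq {K : Type*} [Field K] (q x : K) (N m : ℕ) (hm : m ≤ N)
    (hq0 : q ≠ 0) (hx : x ≠ 0) (u v : K) (hu : u ≠ 0) (hv : v ≠ 0)
    (htu : x * q ^ (-(m:ℤ)) ≠ u) (htv : x * q ^ (-(m:ℤ)) ≠ v) :
    x * q ^ (-((N - m : ℕ):ℤ)) / (x * q ^ (-((N - m : ℕ):ℤ)) - x * (x * q ^ (-(N:ℤ))) / v)
      - x * q ^ (-((N - m : ℕ):ℤ)) / (x * q ^ (-((N - m : ℕ):ℤ)) - x * (x * q ^ (-(N:ℤ))) / u)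
    = x * q ^ (-(m:ℤ)) / (x * q ^ (-(m:ℤ)) - u) - x * q ^ (-(m:ℤ)) / (x * q ^ (-(m:ℤ)) - v) := by
  have ht : x * q ^ (-(m:ℤ)) ≠ 0 := mul_ne_zero hx (zpow_ne_zero _ hq0)
  have hc : x * (x * q ^ (-(N:ℤ))) ≠ 0 :=
    mul_ne_zero hx (mul_ne_zero hx (zpow_ne_zero _ hq0))
  have hkey : x * q ^ (-((N - m : ℕ):ℤ)) = x * (x * q ^ (-(N:ℤ))) / (x * q ^ (-(m:ℤ))) := by
    rw [eq_div_iff ht]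
    have hcast : ((N - m : ℕ):ℤ) = (N:ℤ) - m := by omega
    rw [hcast, mul_mul_mul_comm, ← zpow_add₀ hq0]
    ring_nf
  rw [hkey]
  exact key_frac _ _ u v hc ht hu hv htu htv

/-- The iterated `q`-integral `I_q(x; [u_1,v_1], …, [u_k,v_k]; y)` where `y = x * q^{-N}`:
the sum over all chains `x ⊴ t_1 ⊴ ⋯ ⊴ t_k ⊴ y` (i.e. `t_j = x * q^{-n_j}` with
`0 ≤ n_1 ≤ ⋯ ≤ n_k ≤ N`) of `∏_j (t_j/(t_j - u_j) - t_j/(t_j - v_j))`. -/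
noncomputable def Iq {K : Type*} [Field K] (q x : K) (N : ℕ) (uv : List (K × K)) : K :=
  ∑ n ∈ Finset.univ.filter (fun n : Fin uv.length → Fin (N + 1) =>
      ∀ i j : Fin uv.length, i ≤ j → n i ≤ n j),
    ∏ j : Fin uv.length,
      (x * q ^ (-((n j : ℕ) : ℤ)) / (x * q ^ (-((n j : ℕ) : ℤ)) - (uv.get j).1)
        - x * q ^ (-((n j : ℕ) : ℤ)) / (x * q ^ (-((n j : ℕ) : ℤ)) - (uv.get j).2))

/-- **Inversion identity for iterated `q`-integrals** (Lemma 4.1 of the paper):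
`I_q(x;[u_1,v_1],…,[u_k,v_k];y) = I_q(x;[xy/v_k, xy/u_k],…,[xy/v_1, xy/u_1];y)`,
where `y = x q^{-N}`, provided `q` is not a root of unity, all `u_j, v_j` are nonzero and
avoid the interval `{t : x ⊴ t ⊴ y}`, and the inverted parameters `xy/u_j, xy/v_j` also
avoid the interval. -/
theorem iq_inversion {K : Type*} [Field K] (q x : K) (N : ℕ) (uv : List (K × K))
    (hq0 : q ≠ 0) (hq : ∀ n : ℕ, 1 ≤ n → q ^ n ≠ 1) (hx : x ≠ 0)
    (hnz : ∀ p ∈ uv, p.1 ≠ 0 ∧ p.2 ≠ 0)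
    (havoid : ∀ p ∈ uv, ∀ n : ℕ, n ≤ N →
      x * q ^ (-(n : ℤ)) ≠ p.1 ∧ x * q ^ (-(n : ℤ)) ≠ p.2)
    (havoid' : ∀ p ∈ uv, ∀ n : ℕ, n ≤ N →
      x * q ^ (-(n : ℤ)) ≠ x * (x * q ^ (-(N : ℤ))) / p.1 ∧
      x * q ^ (-(n : ℤ)) ≠ x * (x * q ^ (-(N : ℤ))) / p.2) :
    Iq q x N uv =
      Iq q x N (uv.reverse.map (fun p =>
        (x * (x * q ^ (-(N : ℤ))) / p.2, x * (x * q ^ (-(N : ℤ))) / p.1))) := by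
  classical
  have hL : (uv.reverse.map (fun p : K × K =>
      (x * (x * q ^ (-(N : ℤ))) / p.2, x * (x * q ^ (-(N : ℤ))) / p.1))).length = uv.length := by
    simp
  unfold Iq
  refine Finset.sum_nbij'
    (i := fun n j => (⟨N - (n (Fin.rev (Fin.cast hL j)) : ℕ), by omega⟩ : Fin (N+1)))
    (j := fun m k => (⟨N - (m (Fin.cast hL.symm (Fin.rev k)) : ℕ), by omega⟩ : Fin (N+1)))
    ?_ ?_ ?_ ?_ ?_
  · intro n hn
    simp only [Finset.mem_filter, Finset.mem_univ, true_and] at hn ⊢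
    intro a b hab
    have h1 : Fin.rev (Fin.cast hL b) ≤ Fin.rev (Fin.cast hL a) := by
      rw [Fin.le_def] at hab ⊢
      simp only [Fin.val_rev, Fin.coe_cast]
      omega
    have h2 := hn _ _ h1
    rw [Fin.le_def] at h2 ⊢
    simp only at h2 ⊢
    omega
  · intro m hm
    simp only [Finset.mem_filter, Finset.mem_univ, true_and] at hm ⊢
    intro a b hab
    have h1 : Fin.cast hL.symm (Fin.rev b) ≤ Fin.cast hL.symm (Fin.rev a) := by
      rw [Fin.le_def] at hab ⊢
      simp only [Fin.val_rev, Fin.coe_cast]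
      omega
    have h2 := hm _ _ h1
    rw [Fin.le_def] at h2 ⊢
    simp only at h2 ⊢
    omega
  · intro n hn
    funext k
    have hcc : Fin.cast hL (Fin.cast hL.symm (Fin.rev k)) = Fin.rev k := Fin.ext rfl
    apply Fin.ext
    simp only [hcc, Fin.rev_rev]
    have := (n k).isLt
    omega
  · intro m hm
    funext j
    have hcc : Fin.cast hL.symm (Fin.rev (Fin.rev (Fin.cast hL j))) = j := by
      apply Fin.ext
      simp [Fin.rev_rev]
    apply Fin.ext
    simp only [hcc]
    have := (m j).isLt
    omega
  · intro n hn
    refine Fintype.prod_equiv (Fin.revPerm.trans (finCongr hL.symm)) _ _ ?_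
    intro k
    have hcc : Fin.cast hL (Fin.cast hL.symm (Fin.rev k)) = Fin.rev k := Fin.ext rfl
    simp only [Equiv.trans_apply, Fin.revPerm_apply, finCongr_apply, hcc, Fin.rev_rev]
    have hget : ((uv.reverse.map (fun p : K × K =>
        (x * (x * q ^ (-(N : ℤ))) / p.2, x * (x * q ^ (-(N : ℤ))) / p.1))).get
          (Fin.cast hL.symm (Fin.rev k)))
        = (x * (x * q ^ (-(N : ℤ))) / (uv.get k).2, x * (x * q ^ (-(N : ℤ))) / (uv.get k).1) := by
      have hk := k.isLt
      simp only [List.get_eq_getElem, Fin.coe_cast, Fin.val_rev, List.getElem_map,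
        List.getElem_reverse]
      have hidx : uv.length - 1 - (uv.length - ((k:ℕ) + 1)) = (k:ℕ) := by omega
      simp [hidx]
    rw [hget]
    have hp : uv.get k ∈ uv := List.get_mem uv k
    obtain ⟨hu, hv⟩ := hnz _ hp
    obtain ⟨htu, htv⟩ := havoid _ hp (n k : ℕ) (by have := (n k).isLt; omega)
    exact (factor_eq q x N (n k : ℕ) (by have := (n k).isLt; omega) hq0 hx _ _ hu hv htu htv).symm
end

section
/- With I_q(a_0; a_1,…,a_k; a_{k+1}) := Σ_{a_0 ⊴ t_1 ⊴ ⋯ ⊴ t_k ⊴ a_{k+1}} ∏_{j=1}^k t_j/(t_j − a_j), one has the 0-insertion difference formula: I_q(a_0; a_1,…,a_h, 0, a_{h+1},…,a_k; a_{k+1}) − I_q(a_0; a_1,…,a_h, 0, a_{h+1}q,…,a_k q; a_{k+1}q) = I_q(a_0; a_1,…,a_h, a_{h+1},…,a_k; a_{k+1}). -/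
/-- The iterated `q`-integral `I_q(a_0; a_1, …, a_k; a_{k+1})` with `a_0 = x` and
`a_{k+1} = x * q^{-N}`: the sum over chains `x ⊴ t_1 ⊴ ⋯ ⊴ t_k ⊴ x q^{-N}`
(i.e. `t_j = x q^{-n_j}`, `0 ≤ n_1 ≤ ⋯ ≤ n_k ≤ N`) of `∏_j t_j/(t_j - a_j)`. -/
noncomputable def IqS {K : Type*} [Field K] (q x : K) (N : ℕ) (a : List K) : K :=
  ∑ n ∈ Finset.univ.filter (fun n : Fin a.length → Fin (N + 1) =>
      ∀ i j : Fin a.length, i ≤ j → n i ≤ n j),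
    ∏ j : Fin a.length,
      x * q ^ (-((n j : ℕ) : ℤ)) / (x * q ^ (-((n j : ℕ) : ℤ)) - a.get j)

noncomputable def Fq {K : Type*} [Field K] (q : K) : K → ℕ → List K → K
  | _, _, [] => 1
  | x, N, a :: l => ∑ m : Fin (N + 1),
      (x * q ^ (-((m : ℕ) : ℤ)) / (x * q ^ (-((m : ℕ) : ℤ)) - a)) *
        Fq q (x * q ^ (-((m : ℕ) : ℤ))) (N - (m : ℕ)) l

lemma Fq_nil {K : Type*} [Field K] (q x : K) (N : ℕ) : Fq q x N [] = 1 := rfl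

lemma Fq_cons {K : Type*} [Field K] (q x : K) (N : ℕ) (a : K) (l : List K) :
    Fq q x N (a :: l) = ∑ m : Fin (N + 1),
      (x * q ^ (-((m : ℕ) : ℤ)) / (x * q ^ (-((m : ℕ) : ℤ)) - a)) *
        Fq q (x * q ^ (-((m : ℕ) : ℤ))) (N - (m : ℕ)) l := rfl

lemma IqS_nil {K : Type*} [Field K] (q x : K) (N : ℕ) : IqS q x N [] = 1 := by
  simp [IqS]

lemma zpow_split {K : Type*} [Field K] {q : K} (hq0 : q ≠ 0) (x : K) {m k : ℕ} (hm : m ≤ k) :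
    x * q ^ (-(k : ℤ)) = x * q ^ (-(m : ℤ)) * q ^ (-((k - m : ℕ) : ℤ)) := by
  rw [mul_assoc, ← zpow_add₀ hq0]
  congr 1
  push_cast [Nat.cast_sub hm]
  ring_nf

lemma IqS_eq_Fq {K : Type*} [Field K] {q : K} (hq0 : q ≠ 0) (a : List K) :
    ∀ (x : K) (N : ℕ), IqS q x N a = Fq q x N a := by
  induction a with
  | nil => intro x N; rw [IqS_nil, Fq_nil]
  | cons a l IH =>
    intro x N
    rw [Fq_cons]
    simp only [← IH]
    rw [IqS]; simp only [List.length_cons]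
    rw [← Finset.sum_fiberwise_of_maps_to
      (g := fun n : Fin (l.length + 1) → Fin (N + 1) => n 0)
      (t := Finset.univ) (fun n _ => Finset.mem_univ (n 0))]
    apply Finset.sum_congr rfl
    intro m _
    rw [IqS, Finset.mul_sum]
    refine Finset.sum_nbij'
      (fun n => fun jj : Fin l.length =>
        (⟨(n jj.succ : ℕ) - (m : ℕ), by
          have h1 := (n jj.succ).isLt; omega⟩ : Fin (N - (m : ℕ) + 1)))
      (fun n' => fun i : Fin (l.length + 1) =>
        (⟨(m : ℕ) + Fin.cases (motive := fun _ => ℕ) 0 (fun i' => (n' i' : ℕ)) i, by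
          have hv : Fin.cases (motive := fun _ => ℕ) 0 (fun i' => (n' i' : ℕ)) i ≤ N - (m : ℕ) := by
            rcases Fin.eq_zero_or_eq_succ i with rfl | ⟨i', rfl⟩
            · simp
            · simpa using Nat.lt_succ_iff.mp (n' i').isLt
          have h2 := m.isLt
          omega⟩ : Fin (N + 1)))
      ?_ ?_ ?_ ?_ ?_
    · -- hi
      intro n hn
      simp only [Finset.mem_filter, Finset.mem_univ, true_and] at hn ⊢
      intro i j hij
      rcases hn with ⟨hmono, _⟩
      exact Fin.mk_le_mk.mpr (Nat.sub_le_sub_right (hmono i.succ j.succ (Fin.succ_le_succ_iff.mpr hij)) _)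
    · -- hj
      intro n' hn'
      simp only [Finset.mem_filter, Finset.mem_univ, true_and] at hn' ⊢
      constructor
      · intro i j hij
        rcases Fin.eq_zero_or_eq_succ i with rfl | ⟨i', rfl⟩ <;>
          rcases Fin.eq_zero_or_eq_succ j with rfl | ⟨j', rfl⟩
        · exact le_refl _
        · exact Fin.mk_le_mk.mpr (by simp)
        · exact absurd hij (by simp [Fin.le_def])
        · refine Fin.mk_le_mk.mpr ?_
          simp only [Fin.cases_succ]
          have := hn' i' j' (by simpa [Fin.succ_le_succ_iff] using hij)
          omega
      · apply Fin.ext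
        simp
    · -- left_inv
      intro n hn
      simp only [Finset.mem_filter, Finset.mem_univ, true_and] at hn
      rcases hn with ⟨hmono, hn0⟩
      have hn0' : (n 0 : ℕ) = (m : ℕ) := by rw [hn0]
      funext i
      apply Fin.ext
      rcases Fin.eq_zero_or_eq_succ i with rfl | ⟨i', rfl⟩
      · simp [hn0']
      · simp only [Fin.cases_succ]
        have hle : (m : ℕ) ≤ (n i'.succ : ℕ) := by
          rw [← hn0']; exact hmono 0 i'.succ (Fin.zero_le _)
        simp [Nat.add_sub_cancel' hle]
    · -- right_inv
      intro n' _
      funext jj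
      apply Fin.ext
      simp
    · -- term equality
      intro n hn
      simp only [Finset.mem_filter, Finset.mem_univ, true_and] at hn
      rcases hn with ⟨hmono, hn0⟩
      have hn0' : (n 0 : ℕ) = (m : ℕ) := by rw [hn0]
      rw [Fin.prod_univ_succ]
      congr 1
      · simp [hn0']
      · apply Finset.prod_congr rfl
        intro jj _
        have hle : (m : ℕ) ≤ (n jj.succ : ℕ) := by
          rw [← hn0']; exact hmono 0 jj.succ (Fin.zero_le _)
        rw [zpow_split hq0 x hle]
        simp

/-- factor with letter `b*q` equals factor with letter `b` at shifted base. -/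
lemma factor_mul_q {K : Type*} [Field K] {q : K} (hq0 : q ≠ 0) (y b : K) (m : ℕ) :
    y * q ^ (-(m : ℤ)) / (y * q ^ (-(m : ℤ)) - b * q)
      = y * q⁻¹ * q ^ (-(m : ℤ)) / (y * q⁻¹ * q ^ (-(m : ℤ)) - b) := by
  rw [show y * q ^ (-(m : ℤ)) = q * (y * q⁻¹ * q ^ (-(m : ℤ))) by
        field_simp,
      show q * (y * q⁻¹ * q ^ (-(m : ℤ))) - b * q = q * (y * q⁻¹ * q ^ (-(m : ℤ)) - b) by ring]
  exact mul_div_mul_left _ _ hq0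

lemma Fq_map_q {K : Type*} [Field K] {q : K} (hq0 : q ≠ 0) (l : List K) :
    ∀ (y : K) (M : ℕ), Fq q y M (l.map (· * q)) = Fq q (y * q⁻¹) M l := by
  induction l with
  | nil => intro y M; rfl
  | cons a l IH =>
    intro y M
    rw [List.map_cons, Fq_cons, Fq_cons]
    apply Finset.sum_congr rfl
    intro m _
    rw [factor_mul_q hq0, IH]
    congr 1
    ring_nf

lemma Fq_zero_middle {K : Type*} [Field K] {q : K} (hq0 : q ≠ 0) (post : List K) (pre : List K) :
    ∀ (y : K), y ≠ 0 → Fq q y 0 (pre ++ 0 :: post) = Fq q y 0 (pre ++ post) := by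
  induction pre with
  | nil =>
    intro y hy
    rw [List.nil_append, List.nil_append, Fq_cons]
    simp only [Nat.reduceAdd, Fin.sum_univ_one, Fin.val_zero, Nat.cast_zero, neg_zero,
      zpow_zero, mul_one, sub_zero, div_self hy, one_mul, Nat.sub_zero]
  | cons a pre IH =>
    intro y hy
    rw [List.cons_append, List.cons_append, Fq_cons, Fq_cons]
    apply Finset.sum_congr rfl
    intro m _
    have hm : (m : ℕ) = 0 := by omega
    simp only [hm, Nat.cast_zero, neg_zero, zpow_zero, mul_one, Nat.sub_zero]
    rw [IH y hy]

lemma Fq_main {K : Type*} [Field K] {q : K} (hq0 : q ≠ 0) (post : List K) (pre : List K) :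
    ∀ (x : K), x ≠ 0 → ∀ N : ℕ,
      Fq q x (N + 1) (pre ++ 0 :: post) - Fq q x N (pre ++ 0 :: post.map (· * q))
        = Fq q x (N + 1) (pre ++ post) := by
  induction pre with
  | nil =>
    intro x hx N
    have hz : ∀ m : ℕ, x * q ^ (-(m : ℤ)) ≠ 0 :=
      fun m => mul_ne_zero hx (zpow_ne_zero _ hq0)
    rw [List.nil_append, List.nil_append, List.nil_append, Fq_cons, Fq_cons]
    have e1 : ∀ m : ℕ, x * q ^ (-(m : ℤ)) / (x * q ^ (-(m : ℤ)) - 0) = 1 := by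
      intro m; rw [sub_zero, div_self (hz m)]
    simp only [e1, one_mul, Fq_map_q hq0]
    rw [Fin.sum_univ_succ]
    have hcongr : ∀ i : Fin (N + 1),
        Fq q (x * q ^ (-((i.succ : ℕ) : ℤ))) (N + 1 - (i.succ : ℕ)) post
          = Fq q (x * q ^ (-((i : ℕ) : ℤ)) * q⁻¹) (N - (i : ℕ)) post := by
      intro i
      have h1 : x * q ^ (-((i.succ : ℕ) : ℤ)) = x * q ^ (-((i : ℕ) : ℤ)) * q⁻¹ := by
        rw [Fin.val_succ, mul_assoc, ← zpow_neg_one, ← zpow_add₀ hq0]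
        congr 2
        push_cast
        ring
      rw [h1]
      congr 1
      simp only [Fin.val_succ]
      omega
    simp only [hcongr]
    simp only [Fin.val_zero, Nat.cast_zero, neg_zero, zpow_zero, mul_one, Nat.sub_zero]
    ring
  | cons a pre IH =>
    intro x hx N
    rw [List.cons_append, List.cons_append, List.cons_append, Fq_cons, Fq_cons, Fq_cons]
    rw [Fin.sum_univ_castSucc (n := N + 1) (f := fun m => (x * q ^ (-((m : ℕ) : ℤ)) / (x * q ^ (-((m : ℕ) : ℤ)) - a)) *
        Fq q (x * q ^ (-((m : ℕ) : ℤ))) (N + 1 - (m : ℕ)) (pre ++ 0 :: post)),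
       Fin.sum_univ_castSucc (n := N + 1) (f := fun m => (x * q ^ (-((m : ℕ) : ℤ)) / (x * q ^ (-((m : ℕ) : ℤ)) - a)) *
        Fq q (x * q ^ (-((m : ℕ) : ℤ))) (N + 1 - (m : ℕ)) (pre ++ post))]
    have hkey : ∀ i : Fin (N + 1),
        (x * q ^ (-((i : ℕ) : ℤ)) / (x * q ^ (-((i : ℕ) : ℤ)) - a)) *
            Fq q (x * q ^ (-((i : ℕ) : ℤ))) (N + 1 - (i : ℕ)) (pre ++ 0 :: post)
          - (x * q ^ (-((i : ℕ) : ℤ)) / (x * q ^ (-((i : ℕ) : ℤ)) - a)) *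
            Fq q (x * q ^ (-((i : ℕ) : ℤ))) (N - (i : ℕ)) (pre ++ 0 :: post.map (· * q))
          = (x * q ^ (-((i : ℕ) : ℤ)) / (x * q ^ (-((i : ℕ) : ℤ)) - a)) *
            Fq q (x * q ^ (-((i : ℕ) : ℤ))) (N + 1 - (i : ℕ)) (pre ++ post) := by
      intro i
      have hi : (i : ℕ) ≤ N := by omega
      have hx' : x * q ^ (-((i : ℕ) : ℤ)) ≠ 0 := mul_ne_zero hx (zpow_ne_zero _ hq0)
      have := IH (x * q ^ (-((i : ℕ) : ℤ))) hx' (N - (i : ℕ))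
      rw [show N - (i : ℕ) + 1 = N + 1 - (i : ℕ) by omega] at this
      rw [← mul_sub, this]
    have hlast :
        Fq q (x * q ^ (-(((Fin.last (N + 1)) : ℕ) : ℤ))) (N + 1 - ((Fin.last (N + 1)) : ℕ)) (pre ++ 0 :: post)
          = Fq q (x * q ^ (-(((Fin.last (N + 1)) : ℕ) : ℤ))) (N + 1 - ((Fin.last (N + 1)) : ℕ)) (pre ++ post) := by
      rw [Fin.val_last, Nat.sub_self]
      exact Fq_zero_middle hq0 post pre _ (mul_ne_zero hx (zpow_ne_zero _ hq0))
    have hsum : ∑ i : Fin (N + 1),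
        ((x * q ^ (-(((i.castSucc : Fin (N+2)) : ℕ) : ℤ)) / (x * q ^ (-(((i.castSucc : Fin (N+2)) : ℕ) : ℤ)) - a)) *
          Fq q (x * q ^ (-(((i.castSucc : Fin (N+2)) : ℕ) : ℤ))) (N + 1 - ((i.castSucc : Fin (N+2)) : ℕ)) (pre ++ 0 :: post))
        - ∑ m : Fin (N + 1),
        ((x * q ^ (-((m : ℕ) : ℤ)) / (x * q ^ (-((m : ℕ) : ℤ)) - a)) *
          Fq q (x * q ^ (-((m : ℕ) : ℤ))) (N - (m : ℕ)) (pre ++ 0 :: post.map (· * q)))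
        = ∑ i : Fin (N + 1),
        ((x * q ^ (-(((i.castSucc : Fin (N+2)) : ℕ) : ℤ)) / (x * q ^ (-(((i.castSucc : Fin (N+2)) : ℕ) : ℤ)) - a)) *
          Fq q (x * q ^ (-(((i.castSucc : Fin (N+2)) : ℕ) : ℤ))) (N + 1 - ((i.castSucc : Fin (N+2)) : ℕ)) (pre ++ post)) := by
      rw [← Finset.sum_sub_distrib]
      refine Finset.sum_congr rfl fun i _ => ?_
      simpa [Fin.coe_castSucc] using hkey i
    linear_combination hsum + (x * q ^ (-(((Fin.last (N + 1)) : ℕ) : ℤ)) / (x * q ^ (-(((Fin.last (N + 1)) : ℕ) : ℤ)) - a)) * hlast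

/-- **The 0-insertion `q`-difference formula** (Corollary 2.5 of the paper):
with letters `pre ++ [0] ++ post`, endpoints `a_0 = x`, `a_{k+1} = x q^{-(N+1)}`,
`I_q(a_0; a_1,…,a_h, 0, a_{h+1},…,a_k; a_{k+1})
 − I_q(a_0; a_1,…,a_h, 0, a_{h+1}q,…,a_kq; a_{k+1}q)
 = I_q(a_0; a_1,…,a_h, a_{h+1},…,a_k; a_{k+1})`. -/
theorem iq_zero_insertion_difference {K : Type*} [Field K] (q x : K) (N : ℕ)
    (pre post : List K)
    (hq0 : q ≠ 0) (hq : ∀ n : ℕ, 1 ≤ n → q ^ n ≠ 1) (hx : x ≠ 0)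
    (havoid : ∀ a ∈ pre ++ post, ∀ n : ℕ, n ≤ N + 1 →
      x * q ^ (-(n : ℤ)) ≠ a) :
    IqS q x (N + 1) (pre ++ 0 :: post) - IqS q x N (pre ++ 0 :: post.map (· * q))
      = IqS q x (N + 1) (pre ++ post) := by
  rw [IqS_eq_Fq hq0, IqS_eq_Fq hq0, IqS_eq_Fq hq0]
  exact Fq_main hq0 post pre x hx N
end

section
/- Let A < D be real numbers and B, C real numbers not in [A,D], with A,B,C,D distinct. For admissible words w = e_{u_1v_1}⋯e_{u_kv_k} in the six letters e_{AB},e_{AC},e_{AD},e_{BC},e_{BD},e_{CD} (admissible meaning w does not begin with e_{Av} and does not end with e_{uD}), define L(w) = ∫_{A<t_1<⋯<t_k<D} ∏_{j=1}^k (1/(t_j−u_j) − 1/(t_j−v_j)) dt_j. Let τ be the anti-automorphism on words determined by τ(e_{uv}) = e_{σ(v)σ(u)} where σ swaps A↔D and B↔C. Then L(w) = L(τ(w)) for all admissible words w. -/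
open MeasureTheory

/-- The six formal letters `e_{AB}, e_{AC}, e_{AD}, e_{BC}, e_{BD}, e_{CD}`. -/
inductive Letter : Type
  | AB | AC | AD | BC | BD | CD
  deriving DecidableEq

/-- First coordinate of a letter, as a parameter value. -/
def Letter.fst {α : Type*} (A B C _D : α) : Letter → α
  | .AB => A | .AC => A | .AD => A | .BC => B | .BD => B | .CD => C

/-- Second coordinate of a letter, as a parameter value. -/
def Letter.snd {α : Type*} (_A B C D : α) : Letter → α
  | .AB => B | .AC => C | .AD => D | .BC => C | .BD => D | .CD => D

/-- The letter `e_{σ(v)σ(u)}` obtained from `e_{uv}` by the involution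
`σ = (A D)(B C)`. -/
def Letter.dual : Letter → Letter
  | .AB => .CD | .AC => .BD | .AD => .AD | .BC => .BC | .BD => .AC | .CD => .AB

/-- The anti-automorphism `τ` on words: reverse the word and dualize each letter. -/
def tauWord (w : List Letter) : List Letter := (w.map Letter.dual).reverse

/-- A word is admissible if it does not begin with a letter `e_{Av}` and does not
end with a letter `e_{uD}`. -/
def AdmissibleWord (w : List Letter) : Prop :=
  (∀ u ∈ w.head?, u ∉ [Letter.AB, Letter.AC, Letter.AD]) ∧
  (∀ u ∈ w.getLast?, u ∉ [Letter.AD, Letter.BD, Letter.CD])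

/-- The classical iterated integral
`L(w) = ∫_{A<t_1<⋯<t_k<D} ∏_j (1/(t_j−u_j) − 1/(t_j−v_j)) dt_j`. -/
noncomputable def Lclassical (A B C D : ℝ) (w : List Letter) : ℝ :=
  ∫ t in {t : Fin w.length → ℝ | StrictMono t ∧ ∀ j, t j ∈ Set.Ioo A D},
    ∏ j : Fin w.length,
      (1 / (t j - (w.get j).fst A B C D) - 1 / (t j - (w.get j).snd A B C D))

/-! ### Auxiliary material for the proof -/

namespace ClassicalDualityProof

/-- The Möbius map `t ↦ (Pt+Q)/(Rt-P)`. -/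
noncomputable def mo (P Q R t : ℝ) : ℝ := (P*t + Q)/(R*t - P)

lemma mo_sub {P Q R : ℝ} (t u : ℝ) (ht : R*t - P ≠ 0) (hu : R*u - P ≠ 0) :
    mo P Q R t - mo P Q R u = (P^2+Q*R)*(u-t)/((R*t-P)*(R*u-P)) := by
  unfold mo; rw [div_sub_div _ _ ht hu]; congr 1 <;> ring

lemma mo_key {P Q R : ℝ} (hdet : P^2+Q*R ≠ 0) (t u v : ℝ)
    (ht : R*t - P ≠ 0) (hu : R*u - P ≠ 0) (hv : R*v - P ≠ 0)
    (htu : t ≠ u) (htv : t ≠ v) :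
    (P^2+Q*R)/(R*t-P)^2 * (1/(mo P Q R t - mo P Q R v) - 1/(mo P Q R t - mo P Q R u))
      = 1/(t-u) - 1/(t-v) := by
  rw [mo_sub t u ht hu, mo_sub t v ht hv]
  have h1 : u - t ≠ 0 := sub_ne_zero.2 htu.symm
  have h2 : v - t ≠ 0 := sub_ne_zero.2 htv.symm
  have h3 : t - u ≠ 0 := sub_ne_zero.2 htu
  have h4 : t - v ≠ 0 := sub_ne_zero.2 htv
  field_simp
  ring

lemma mo_invol {P Q R : ℝ} (hdet : P^2+Q*R ≠ 0) (t : ℝ) (ht : R*t - P ≠ 0) :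
    mo P Q R (mo P Q R t) = t := by
  have h2 : R * ((P*t+Q)/(R*t-P)) - P = (P^2+Q*R)/(R*t-P) := by field_simp; ring
  unfold mo
  rw [h2, div_eq_iff (div_ne_zero hdet ht)]
  rw [mul_div_assoc', div_add' _ _ _ ht, mul_div_assoc', div_left_inj' ht]
  ring

lemma mo_hasDerivAt {P Q R : ℝ} (t : ℝ) (ht : R*t - P ≠ 0) :
    HasDerivAt (mo P Q R) (-(P^2+Q*R)/(R*t-P)^2) t := by
  have h1 : HasDerivAt (fun t : ℝ => P*t+Q) P t := by
    simpa using ((hasDerivAt_id t).const_mul P).add_const Q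
  have h2 : HasDerivAt (fun t : ℝ => R*t-P) R t := by
    simpa using ((hasDerivAt_id t).const_mul R).sub_const P
  have := h1.div h2 ht
  unfold mo
  refine this.congr_deriv ?_
  rw [div_left_inj' (pow_ne_zero 2 ht)]
  ring

variable {A B C D : ℝ}

def Pc (A B C D : ℝ) : ℝ := A*D - B*C
def Qc (A B C D : ℝ) : ℝ := B*C*(A+D) - A*D*(B+C)
def Rc (A B C D : ℝ) : ℝ := (A+D) - (B+C)

/-- The Möbius transformation sending `(A,B,C,D)` to `(D,C,B,A)`. -/
noncomputable def phi (A B C D t : ℝ) : ℝ := mo (Pc A B C D) (Qc A B C D) (Rc A B C D) t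

/-- Its derivative. -/
noncomputable def phi' (A B C D t : ℝ) : ℝ :=
  -((Pc A B C D)^2+(Qc A B C D)*(Rc A B C D))/((Rc A B C D)*t - Pc A B C D)^2

lemma RA_eq : Rc A B C D * A - Pc A B C D = (A-B)*(A-C) := by unfold Pc Rc; ring
lemma RD_eq : Rc A B C D * D - Pc A B C D = (D-B)*(D-C) := by unfold Pc Rc; ring
lemma RB_eq : Rc A B C D * B - Pc A B C D = (A-B)*(B-D) := by unfold Pc Rc; ring
lemma RC_eq : Rc A B C D * C - Pc A B C D = (A-C)*(C-D) := by unfold Pc Rc; ring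

lemma outside_pos (hAD : A < D) (hB : B ∉ Set.Icc A D) : 0 < (A-B)*(D-B) := by
  have h : B < A ∨ D < B := by
    rcases lt_or_ge B A with h | h
    · exact Or.inl h
    · rcases lt_or_ge D B with h' | h'
      · exact Or.inr h'
      · exact absurd ⟨h, h'⟩ hB
  rcases h with h | h <;> nlinarith

variable (hAD : A < D) (hB : B ∉ Set.Icc A D) (hC : C ∉ Set.Icc A D)
  (hAB : A ≠ B) (hAC : A ≠ C) (hBC : B ≠ C) (hBD : B ≠ D) (hCD : C ≠ D)

include hAD hB hC in
lemma det_pos : 0 < (Pc A B C D)^2 + (Qc A B C D)*(Rc A B C D) := by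
  have h1 := outside_pos hAD hB
  have h2 := outside_pos hAD hC
  have h : (Pc A B C D)^2 + (Qc A B C D)*(Rc A B C D) = ((A-B)*(D-B))*((A-C)*(D-C)) := by
    unfold Pc Qc Rc; ring
  rw [h]; exact mul_pos h1 h2

include hAD hB hC in
lemma sign_lemma : ∀ t ∈ Set.Icc A D,
    0 < (Rc A B C D * A - Pc A B C D) * (Rc A B C D * t - Pc A B C D) := by
  intro t ht
  set P := Pc A B C D; set R := Rc A B C D
  have hprod : 0 < (R*A-P)*(R*D-P) := by
    rw [RA_eq, RD_eq]
    have h1 := outside_pos hAD hB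
    have h2 := outside_pos hAD hC
    nlinarith
  rcases eq_or_lt_of_le ht.1 with h | h
  · have hne : R*A-P ≠ 0 := left_ne_zero_of_mul hprod.ne'
    rw [← h]
    exact mul_self_pos.2 hne
  · nlinarith [mul_pos (sub_pos.2 h) hprod,
      mul_nonneg (sub_nonneg.2 ht.2) (sq_nonneg (R*A-P)), ht.2]

include hAD hB hC in
lemma Rt_ne : ∀ t ∈ Set.Icc A D, Rc A B C D * t - Pc A B C D ≠ 0 := by
  intro t ht h
  have := sign_lemma hAD hB hC t ht
  rw [h, mul_zero] at this
  exact lt_irrefl 0 this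

include hAD hB hC in
lemma prod_pos : ∀ s ∈ Set.Icc A D, ∀ t ∈ Set.Icc A D,
    0 < (Rc A B C D * s - Pc A B C D) * (Rc A B C D * t - Pc A B C D) := by
  intro s hs t ht
  have h1 := sign_lemma hAD hB hC s hs
  have h2 := sign_lemma hAD hB hC t ht
  have h3 := sign_lemma hAD hB hC A ⟨le_refl A, hAD.le⟩
  nlinarith

include hAB hAC in
lemma RA_ne : Rc A B C D * A - Pc A B C D ≠ 0 := by
  rw [RA_eq]; exact mul_ne_zero (sub_ne_zero.2 hAB) (sub_ne_zero.2 hAC)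
include hBD hCD in
lemma RD_ne : Rc A B C D * D - Pc A B C D ≠ 0 := by
  rw [RD_eq]; exact mul_ne_zero (sub_ne_zero.2 (fun h => hBD (by linarith)))
    (sub_ne_zero.2 (fun h => hCD (by linarith)))
include hAB hBD in
lemma RB_ne : Rc A B C D * B - Pc A B C D ≠ 0 := by
  rw [RB_eq]; exact mul_ne_zero (sub_ne_zero.2 hAB) (sub_ne_zero.2 hBD)
include hAC hCD in
lemma RC_ne : Rc A B C D * C - Pc A B C D ≠ 0 := by
  rw [RC_eq]; exact mul_ne_zero (sub_ne_zero.2 hAC) (sub_ne_zero.2 hCD)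

include hAB hAC in
lemma phi_A : phi A B C D A = D := by
  unfold phi mo
  rw [div_eq_iff (RA_ne hAB hAC)]
  unfold Pc Qc Rc; ring
include hAB hBD in
lemma phi_B : phi A B C D B = C := by
  unfold phi mo
  rw [div_eq_iff (RB_ne hAB hBD)]
  unfold Pc Qc Rc; ring
include hAC hCD in
lemma phi_C : phi A B C D C = B := by
  unfold phi mo
  rw [div_eq_iff (RC_ne hAC hCD)]
  unfold Pc Qc Rc; ring
include hBD hCD in
lemma phi_D : phi A B C D D = A := by
  unfold phi mo
  rw [div_eq_iff (RD_ne hBD hCD)]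
  unfold Pc Qc Rc; ring

include hAD hB hC in
lemma phi_anti : ∀ s ∈ Set.Icc A D, ∀ t ∈ Set.Icc A D, s < t →
    phi A B C D t < phi A B C D s := by
  intro s hs t ht hst
  have h := mo_sub (P := Pc A B C D) (Q := Qc A B C D) (R := Rc A B C D) s t
    (Rt_ne hAD hB hC s hs) (Rt_ne hAD hB hC t ht)
  have hpos : 0 < ((Pc A B C D)^2+(Qc A B C D)*(Rc A B C D))*(t-s)
      / ((Rc A B C D*s-Pc A B C D)*(Rc A B C D*t-Pc A B C D)) :=
    div_pos (mul_pos (det_pos hAD hB hC) (by linarith)) (prod_pos hAD hB hC s hs t ht)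
  have : (0:ℝ) < phi A B C D s - phi A B C D t := by
    unfold phi; rw [h]; exact hpos
  linarith

include hAD hB hC hAB hAC hBD hCD in
lemma phi_mem_Ioo : ∀ t ∈ Set.Ioo A D, phi A B C D t ∈ Set.Ioo A D := by
  intro t ht
  constructor
  · have := phi_anti hAD hB hC t ⟨ht.1.le, ht.2.le⟩ D ⟨hAD.le, le_refl D⟩ ht.2
    rw [phi_D hBD hCD] at this
    exact this
  · have := phi_anti hAD hB hC A ⟨le_refl A, hAD.le⟩ t ⟨ht.1.le, ht.2.le⟩ ht.1
    rw [phi_A hAB hAC] at this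
    exact this

include hAD hB hC in
lemma phi_invol : ∀ t ∈ Set.Icc A D, phi A B C D (phi A B C D t) = t := fun t ht =>
  mo_invol (det_pos hAD hB hC).ne' t (Rt_ne hAD hB hC t ht)

include hAD hB hC in
lemma phi_hasDerivAt : ∀ t ∈ Set.Icc A D, HasDerivAt (phi A B C D) (phi' A B C D t) t :=
  fun t ht => mo_hasDerivAt t (Rt_ne hAD hB hC t ht)

set_option linter.unusedSectionVars false in
include hAD hB hC hAB hAC hBC hBD hCD in
/-- The key pointwise identity: `|φ'(t)| f_{l}(φ(t)) = f_{dual l}(t)`. -/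
lemma letter_key (l : Letter) : ∀ t ∈ Set.Ioo A D,
    |phi' A B C D t| * (1/(phi A B C D t - l.fst A B C D) - 1/(phi A B C D t - l.snd A B C D))
      = 1/(t - (l.dual.fst A B C D)) - 1/(t - (l.dual.snd A B C D)) := by
  intro t ht
  have htI : t ∈ Set.Icc A D := ⟨ht.1.le, ht.2.le⟩
  have htne := Rt_ne hAD hB hC t htI
  have hdet := det_pos hAD hB hC
  have habs : |phi' A B C D t| =
      ((Pc A B C D)^2+(Qc A B C D)*(Rc A B C D))/((Rc A B C D)*t - Pc A B C D)^2 := by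
    unfold phi'
    rw [abs_div, abs_neg, abs_of_pos hdet, abs_of_pos
      (lt_of_le_of_ne (sq_nonneg _) (Ne.symm (pow_ne_zero 2 htne)))]
  have hAne := RA_ne (A := A) (B := B) (C := C) (D := D) hAB hAC
  have hBne := RB_ne (A := A) (B := B) (C := C) (D := D) hAB hBD
  have hCne := RC_ne (A := A) (B := B) (C := C) (D := D) hAC hCD
  have hDne := RD_ne (A := A) (B := B) (C := C) (D := D) hBD hCD
  have htA : t ≠ A := ht.1.ne'
  have htD : t ≠ D := ht.2.ne
  have htB : t ≠ B := fun h => hB (h ▸ htI)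
  have htC : t ≠ C := fun h => hC (h ▸ htI)
  have hpA := phi_A (D := D) hAB hAC
  have hpB := phi_B (C := C) hAB hBD
  have hpC := phi_C (B := B) hAC hCD
  have hpD := phi_D (A := A) hBD hCD
  have hpA' : mo (Pc A B C D) (Qc A B C D) (Rc A B C D) A = D := hpA
  have hpB' : mo (Pc A B C D) (Qc A B C D) (Rc A B C D) B = C := hpB
  have hpC' : mo (Pc A B C D) (Qc A B C D) (Rc A B C D) C = B := hpC
  have hpD' : mo (Pc A B C D) (Qc A B C D) (Rc A B C D) D = A := hpD
  cases l <;>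
    simp only [Letter.fst, Letter.snd, Letter.dual] <;>
    rw [habs]
  · have h := mo_key hdet.ne' t C D htne hCne hDne htC htD
    rw [hpD', hpC'] at h; exact h
  · have h := mo_key hdet.ne' t B D htne hBne hDne htB htD
    rw [hpD', hpB'] at h; exact h
  · have h := mo_key hdet.ne' t A D htne hAne hDne htA htD
    rw [hpD', hpA'] at h; exact h
  · have h := mo_key hdet.ne' t B C htne hBne hCne htB htC
    rw [hpC', hpB'] at h; exact h
  · have h := mo_key hdet.ne' t A C htne hAne hCne htA htC
    rw [hpC', hpA'] at h; exact h
  · have h := mo_key hdet.ne' t A B htne hAne hBne htA htB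
    rw [hpB', hpA'] at h; exact h

/-! ### The multidimensional part -/

/-- The iterated integral as a function of a "letter assignment". -/
noncomputable def Iw (A B C D : ℝ) (k : ℕ) (ℓ : Fin k → Letter) : ℝ :=
  ∫ t in {t : Fin k → ℝ | StrictMono t ∧ ∀ j, t j ∈ Set.Ioo A D},
    ∏ j : Fin k,
      (1 / (t j - (ℓ j).fst A B C D) - 1 / (t j - (ℓ j).snd A B C D))

lemma Iw_cast (A B C D : ℝ) {k k' : ℕ} (h : k = k') (ℓ : Fin k' → Letter) :
    Iw A B C D k' ℓ = Iw A B C D k (fun j => ℓ (Fin.cast h j)) := by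
  subst h; rfl

lemma measurable_simplex (A D : ℝ) (k : ℕ) :
    MeasurableSet {t : Fin k → ℝ | StrictMono t ∧ ∀ j, t j ∈ Set.Ioo A D} := by
  have h1 : MeasurableSet {t : Fin k → ℝ | StrictMono t} := by
    have : {t : Fin k → ℝ | StrictMono t}
        = ⋂ (i) (j) (_ : i < j), {t : Fin k → ℝ | t i < t j} := by
      ext t
      simp only [Set.mem_iInter, Set.mem_setOf_eq]
      exact ⟨fun h i j hij => h hij, fun h a b hab => h a b hab⟩
    rw [this]
    exact MeasurableSet.iInter fun i => MeasurableSet.iInter fun j =>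
      MeasurableSet.iInter fun _ =>
        measurableSet_lt (measurable_pi_apply i) (measurable_pi_apply j)
  have h2 : MeasurableSet {t : Fin k → ℝ | ∀ j, t j ∈ Set.Ioo A D} := by
    have : {t : Fin k → ℝ | ∀ j, t j ∈ Set.Ioo A D}
        = ⋂ j, (fun t : Fin k → ℝ => t j) ⁻¹' (Set.Ioo A D) := by
      ext t; simp
    rw [this]
    exact MeasurableSet.iInter fun j => (measurable_pi_apply j) measurableSet_Ioo
  exact h1.inter h2

/-- determinant of a diagonal continuous linear map on `Fin k → ℝ`. -/
lemma det_diag_clm (k : ℕ) (d : Fin k → ℝ) :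
    (ContinuousLinearMap.pi
      (fun j : Fin k => d j • ContinuousLinearMap.proj (R := ℝ) (φ := fun _ : Fin k => ℝ) j)).det
      = ∏ j, d j := by
  have h : ((ContinuousLinearMap.pi
      (fun j : Fin k => d j • ContinuousLinearMap.proj (R := ℝ) (φ := fun _ : Fin k => ℝ) j))
        : (Fin k → ℝ) →ₗ[ℝ] (Fin k → ℝ))
      = Matrix.toLin' (Matrix.diagonal d) := by
    apply LinearMap.ext; intro v
    funext j
    simp [Matrix.toLin'_apply, Matrix.mulVec_diagonal, mul_comm]
  rw [ContinuousLinearMap.det, h, LinearMap.det_toLin', Matrix.det_diagonal]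

/-- Step A: reversal of the integration variables. -/
lemma step_rev (A B C D : ℝ) (k : ℕ) (ℓ : Fin k → Letter) :
    Iw A B C D k ℓ =
      ∫ t in {t : Fin k → ℝ | StrictAnti t ∧ ∀ j, t j ∈ Set.Ioo A D},
        ∏ j : Fin k,
          (1 / (t j - (ℓ j.rev).fst A B C D) - 1 / (t j - (ℓ j.rev).snd A B C D)) := by
  classical
  set e := MeasurableEquiv.piCongrLeft (fun _ : Fin k => ℝ) (Fin.revPerm (n := k)) with he_def
  have he : ∀ (t : Fin k → ℝ) (j : Fin k), e t j = t j.rev := by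
    intro t j
    rw [he_def]
    rw [show j = Fin.revPerm j.rev by simp]
    rw [MeasurableEquiv.coe_piCongrLeft]
    rw [Equiv.piCongrLeft_apply_apply]
    simp
  have key := (volume_measurePreserving_piCongrLeft (fun _ : Fin k => ℝ)
      (Fin.revPerm (n := k))).setIntegral_preimage_emb
      (MeasurableEquiv.measurableEmbedding _)
      (fun t : Fin k → ℝ => ∏ j : Fin k,
        (1 / (t j - (ℓ j).fst A B C D) - 1 / (t j - (ℓ j).snd A B C D)))
      {t : Fin k → ℝ | StrictMono t ∧ ∀ j, t j ∈ Set.Ioo A D}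
  rw [Iw, ← key]
  have hpre : e ⁻¹' {t : Fin k → ℝ | StrictMono t ∧ ∀ j, t j ∈ Set.Ioo A D}
      = {t : Fin k → ℝ | StrictAnti t ∧ ∀ j, t j ∈ Set.Ioo A D} := by
    ext x
    have hex : e x = fun j => x j.rev := funext (he x)
    simp only [Set.mem_preimage, Set.mem_setOf_eq, hex]
    constructor
    · rintro ⟨h1, h2⟩
      refine ⟨fun i j hij => ?_, fun j => by simpa using h2 j.rev⟩
      have := h1 (Fin.rev_lt_rev.mpr hij)
      simpa using this
    · rintro ⟨h1, h2⟩
      exact ⟨fun i j hij => h1 (Fin.rev_lt_rev.mpr hij), fun j => h2 j.rev⟩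
  rw [hpre]
  refine integral_congr_ae (Filter.Eventually.of_forall fun x => ?_)
  simp only [he]
  exact Fintype.prod_equiv Fin.revPerm _ _ (fun j => by simp only [← he_def, he, Fin.revPerm_apply, Fin.rev_rev])

set_option linter.unusedSectionVars false in
include hAD hB hC hAB hAC hBC hBD hCD in
/-- Step B: the Möbius change of variables. -/
lemma step_mob (k : ℕ) (m : Fin k → Letter) :
    (∫ t in {t : Fin k → ℝ | StrictAnti t ∧ ∀ j, t j ∈ Set.Ioo A D},
        ∏ j : Fin k,
          (1 / (t j - (m j).fst A B C D) - 1 / (t j - (m j).snd A B C D)))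
      = Iw A B C D k (fun j => (m j).dual) := by
  have hIcc : ∀ {x : ℝ}, x ∈ Set.Ioo A D → x ∈ Set.Icc A D :=
    fun h => ⟨h.1.le, h.2.le⟩
  have hS := measurable_simplex A D k
  have hder : ∀ t ∈ {t : Fin k → ℝ | StrictMono t ∧ ∀ j, t j ∈ Set.Ioo A D},
      HasFDerivWithinAt (fun (t : Fin k → ℝ) (j : Fin k) => phi A B C D (t j))
        (ContinuousLinearMap.pi (fun j : Fin k => phi' A B C D (t j) •
          ContinuousLinearMap.proj (R := ℝ) (φ := fun _ : Fin k => ℝ) j))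
        {t : Fin k → ℝ | StrictMono t ∧ ∀ j, t j ∈ Set.Ioo A D} t := by
    intro t ht
    refine HasFDerivAt.hasFDerivWithinAt (hasFDerivAt_pi.2 fun j => ?_)
    exact (phi_hasDerivAt hAD hB hC (t j) (hIcc (ht.2 j))).comp_hasFDerivAt t
      (hasFDerivAt_apply j t)
  have hinj : Set.InjOn (fun (t : Fin k → ℝ) (j : Fin k) => phi A B C D (t j))
      {t : Fin k → ℝ | StrictMono t ∧ ∀ j, t j ∈ Set.Ioo A D} := by
    intro t ht t' ht' h
    funext j
    have h1 := phi_invol hAD hB hC (t j) (hIcc (ht.2 j))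
    have h2 := phi_invol hAD hB hC (t' j) (hIcc (ht'.2 j))
    have h3 : phi A B C D (t j) = phi A B C D (t' j) := congrFun h j
    rw [← h1, ← h2, h3]
  have himg : (fun (t : Fin k → ℝ) (j : Fin k) => phi A B C D (t j)) ''
      {t : Fin k → ℝ | StrictMono t ∧ ∀ j, t j ∈ Set.Ioo A D}
      = {t : Fin k → ℝ | StrictAnti t ∧ ∀ j, t j ∈ Set.Ioo A D} := by
    apply Set.Subset.antisymm
    · rintro x ⟨t, ht, rfl⟩
      refine ⟨fun i j hij => ?_, fun j => phi_mem_Ioo hAD hB hC hAB hAC hBD hCD _ (ht.2 j)⟩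
      exact phi_anti hAD hB hC (t i) (hIcc (ht.2 i)) (t j) (hIcc (ht.2 j)) (ht.1 hij)
    · intro s hs
      refine ⟨fun j => phi A B C D (s j), ⟨fun i j hij => ?_,
        fun j => phi_mem_Ioo hAD hB hC hAB hAC hBD hCD _ (hs.2 j)⟩,
        funext fun j => phi_invol hAD hB hC (s j) (hIcc (hs.2 j))⟩
      exact phi_anti hAD hB hC (s j) (hIcc (hs.2 j)) (s i) (hIcc (hs.2 i)) (hs.1 hij)
  rw [← himg, integral_image_eq_integral_abs_det_fderiv_smul volume hS hder hinj, Iw]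
  refine setIntegral_congr_fun hS (fun t ht => ?_)
  rw [det_diag_clm, smul_eq_mul, Finset.abs_prod, ← Finset.prod_mul_distrib]
  exact Finset.prod_congr rfl fun j _ =>
    letter_key hAD hB hC hAB hAC hBC hBD hCD (m j) (t j) (ht.2 j)

include hAD hB hC hAB hAC hBC hBD hCD in
/-- The heart of the duality, for letter assignments. -/
lemma core (k : ℕ) (ℓ : Fin k → Letter) :
    Iw A B C D k ℓ = Iw A B C D k (fun j => (ℓ j.rev).dual) := by
  rw [step_rev A B C D k ℓ, step_mob hAD hB hC hAB hAC hBC hBD hCD k (fun j => ℓ j.rev)]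

end ClassicalDualityProof

open ClassicalDualityProof in
/-- **The classical duality** (Theorem 1.1 of the paper): if `A < D` are real,
`B, C ∉ [A,D]`, and `A, B, C, D` are pairwise distinct, then `L(w) = L(τ(w))`
for every admissible word `w`. -/
theorem classical_duality (A B C D : ℝ) (hAD : A < D)
    (hB : B ∉ Set.Icc A D) (hC : C ∉ Set.Icc A D)
    (hAB : A ≠ B) (hAC : A ≠ C) (hBC : B ≠ C) (hBD : B ≠ D) (hCD : C ≠ D)
    (w : List Letter) (hw : AdmissibleWord w) :
    Lclassical A B C D w = Lclassical A B C D (tauWord w) := by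
  have hlen : (tauWord w).length = w.length := by simp [tauWord]
  have h1 : Lclassical A B C D w = Iw A B C D w.length w.get := rfl
  have h2 : Lclassical A B C D (tauWord w)
      = Iw A B C D (tauWord w).length (tauWord w).get := rfl
  have h3 : Iw A B C D (tauWord w).length (tauWord w).get
      = Iw A B C D w.length (fun j => (tauWord w).get (Fin.cast hlen.symm j)) :=
    Iw_cast A B C D hlen.symm (tauWord w).get
  have h4 : (fun j : Fin w.length => (tauWord w).get (Fin.cast hlen.symm j))
      = fun j : Fin w.length => (w.get j.rev).dual := by
    funext j
    simp only [tauWord, List.get_eq_getElem, List.getElem_reverse, List.getElem_map,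
      Fin.coe_cast, Fin.val_rev, List.length_map]
    congr 2
    show w.length - 1 - (j:ℕ) = w.length - ((j:ℕ)+1)
    omega
  rw [h1, h2, h3, h4]
  exact core hAD hB hC hAB hAC hBC hBD hCD w.length w.get
end

section
/- Duality with a repeated e_{AD}-free reduction at A=0, B=C=∞, D=1: for a word w = w_1 e_{AD} w_2 in the letters {e_{AB}, e_{AC}, e_{AD}, e_{BC}, e_{BD}, e_{CD}} with w admissible, define f(w) := I_q(0; [u_1^{(1)}, v_1^{(1)}], …, [u_k^{(k)}, v_k^{(k)}]; 1) ∈ ℚ[[q]] where A^{(j)} = 0, B^{(j)} = C^{(j)} = ∞ (a factor t/(t−∞) is interpreted as 0, i.e., the bracket [u,∞] contributes t/(t−u)), and D^{(j)} = q^{−#{h ≥ j : u_h v_h ∈ {AB, AC, BC}}}. Then f(w_1 e_{AD} w_2) = f(w_1 e_{AB} w_2) + f(w_1 e_{BD} w_2) + f(w_1 w_2). -/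
/- We endow `ℚ[[q]]` with the product topology (coefficientwise convergence), so that
the `q`-adically convergent sums of the paper become honest `tsum`s. -/
noncomputable instance : TopologicalSpace (PowerSeries ℚ) :=
  inferInstanceAs (TopologicalSpace ((Unit →₀ ℕ) → ℚ))

instance : T2Space (PowerSeries ℚ) :=
  inferInstanceAs (T2Space ((Unit →₀ ℕ) → ℚ))

/-- Whether a letter lies in `{AB, AC, BC}` (these are the letters contributing to the
shift of `D`). -/
def Letter.isUpper : Letter → Bool
  | .AB => true | .AC => true | .BC => true | _ => false

/-- `#{h ≥ j : u_h ∈ {AB, AC, BC}}` (0-indexed, `h ≥ j` inclusive), so that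
`D^{(j)} = q^{−dsh w j}`. -/
def dsh (w : List Letter) (j : ℕ) : ℕ := ((w.drop j).countP Letter.isUpper)

/-- The factor of the iterated `q`-integral at specialization `A = 0`, `B = C = ∞`,
`D^{(j)} = q^{−c}`, for chain point `t = q^m` and `e = m + c`: with the conventions
`t/(t−0) = 1` and `t/(t−∞) = 0`, the bracket `[u,v]` contributes
`t/(t−u) − t/(t−v)`, namely `1` for `e_{AB}, e_{AC}`, `0` for `e_{BC}`,
`1 + q^e(1−q^e)^{−1}` for `e_{AD}`, and `q^e(1−q^e)^{−1}` for `e_{BD}, e_{CD}`. -/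
noncomputable def lfactor : Letter → ℕ → PowerSeries ℚ
  | .AB => fun _ => 1
  | .AC => fun _ => 1
  | .BC => fun _ => 0
  | .AD => fun e => 1 + (PowerSeries.X : PowerSeries ℚ) ^ e
      * Ring.inverse (1 - (PowerSeries.X : PowerSeries ℚ) ^ e)
  | .BD => fun e => (PowerSeries.X : PowerSeries ℚ) ^ e
      * Ring.inverse (1 - (PowerSeries.X : PowerSeries ℚ) ^ e)
  | .CD => fun e => (PowerSeries.X : PowerSeries ℚ) ^ e
      * Ring.inverse (1 - (PowerSeries.X : PowerSeries ℚ) ^ e)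

/-- `f(w) = I_q(0; [u_1^{(1)},v_1^{(1)}],…,[u_k^{(k)},v_k^{(k)}]; 1) ∈ ℚ[[q]]` at the
specialization `A = 0`, `B = C = ∞`, `D = 1`: the sum over chains
`t_1 ⊴ ⋯ ⊴ t_k ⊴ 1` in `{q^m : m ≥ 0}` (i.e. `t_j = q^{m_j}` with
`m_1 ≥ ⋯ ≥ m_k ≥ 0`) of the product of the factors above. -/
noncomputable def fword (w : List Letter) : PowerSeries ℚ :=
  ∑' m : {m : Fin w.length → ℕ // Antitone m},
    ∏ j : Fin w.length, lfactor (w.get j) (m.1 j + dsh w (j : ℕ))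


instance : ContinuousAdd (PowerSeries ℚ) :=
  inferInstanceAs (ContinuousAdd ((Unit →₀ ℕ) → ℚ))

lemma X_pow_dvd_lfactor {L : Letter} (hL : L ∉ [Letter.AB, Letter.AC, Letter.AD]) (e : ℕ) :
    (PowerSeries.X : PowerSeries ℚ) ^ e ∣ lfactor L e := by
  cases L with
  | AB => simp at hL
  | AC => simp at hL
  | AD => simp at hL
  | BC => exact dvd_zero _
  | BD => exact dvd_mul_right _ _
  | CD => exact dvd_mul_right _ _

lemma summable_aux {k : ℕ} (hk : 0 < k) {ι : Type*} (e : ι → {m : Fin k → ℕ // Antitone m})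
    (he : Function.Injective e) (F : ι → PowerSeries ℚ)
    (hF : ∀ x, (PowerSeries.X : PowerSeries ℚ) ^ ((e x).1 ⟨0, hk⟩) ∣ F x) : Summable F := by
  refine Pi.summable.mpr fun d => ?_
  set N := d () with hN
  apply summable_of_finite_support
  have hsub : Function.support (fun x => F x d) ⊆ {x | (e x).1 ⟨0, hk⟩ ≤ N} := by
    intro x hx
    by_contra h
    simp only [Set.mem_setOf_eq, not_le] at h
    apply hx
    have hc : PowerSeries.coeff N (F x) = 0 := PowerSeries.X_pow_dvd_iff.mp (hF x) N h
    have hd : d = Finsupp.single () N := by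
      refine Finsupp.ext fun u => ?_; cases u; simp [hN]
    rw [hd]
    exact hc
  refine Set.Finite.subset ?_ hsub
  have hfin : Set.Finite {m : {m : Fin k → ℕ // Antitone m} | m.1 ⟨0, hk⟩ ≤ N} := by
    apply Set.Finite.of_finite_image
      (f := fun (m : {m : Fin k → ℕ // Antitone m}) (j : Fin k) => (⟨min (m.1 j) N, by omega⟩ : Fin (N+1)))
    · exact Set.toFinite _
    · intro m hm m' hm' hEq
      apply Subtype.ext; funext j
      have h1 : m.1 j ≤ N := le_trans (m.2 (show (⟨0, hk⟩ : Fin k) ≤ j by simp [Fin.le_def])) hm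
      have h2 : m'.1 j ≤ N := le_trans (m'.2 (show (⟨0, hk⟩ : Fin k) ≤ j by simp [Fin.le_def])) hm'
      have h3 := congrFun hEq j
      simp only [Fin.mk.injEq] at h3
      omega
  have : {x : ι | (e x).1 ⟨0, hk⟩ ≤ N} = e ⁻¹' {m | m.1 ⟨0, hk⟩ ≤ N} := rfl
  rw [this]
  exact Set.Finite.preimage (he.injOn) hfin

noncomputable def termN (w : List Letter) (k : ℕ) (h : w.length = k) (m : Fin k → ℕ) :
    PowerSeries ℚ :=
  ∏ j : Fin k, lfactor (w[(j : ℕ)]'(lt_of_lt_of_le j.2 h.ge)) (m j + dsh w (j : ℕ))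

lemma fword_eq (w : List Letter) (k : ℕ) (h : w.length = k) :
    fword w = ∑' m : {m : Fin k → ℕ // Antitone m}, termN w k h m.1 := by
  subst h; rfl



/-- Shift by 1 on positions `≤ p`: a bijection from antitone tuples to antitone tuples
with a strict decrease from position `p` to `p+1`. -/
def shiftEquiv (k p : ℕ) (hpk : p + 1 < k) :
    {m : Fin k → ℕ // Antitone m} ≃
      {x : {m : Fin k → ℕ // Antitone m} // x.1 ⟨p + 1, hpk⟩ < x.1 ⟨p, by omega⟩} where
  toFun m := ⟨⟨fun j => m.1 j + (if (j : ℕ) ≤ p then 1 else 0), by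
      intro i j hij
      have h1 : m.1 j ≤ m.1 i := m.2 hij
      have h2 : (i : ℕ) ≤ (j : ℕ) := hij
      dsimp only
      split_ifs <;> omega⟩, by
      have h1 : m.1 ⟨p + 1, hpk⟩ ≤ m.1 ⟨p, by omega⟩ := m.2 (by simp [Fin.le_def])
      dsimp only
      split_ifs <;> omega⟩
  invFun x := ⟨fun j => x.1.1 j - (if (j : ℕ) ≤ p then 1 else 0), by
      intro i j hij
      have h1 : x.1.1 j ≤ x.1.1 i := x.1.2 hij
      have h2 : (i : ℕ) ≤ (j : ℕ) := hij
      have h3 : x.1.1 ⟨p + 1, hpk⟩ < x.1.1 ⟨p, by omega⟩ := x.2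
      dsimp only
      by_cases hc1 : (j : ℕ) ≤ p
      · have hc2 : (i : ℕ) ≤ p := by omega
        simp only [if_pos hc1, if_pos hc2]
        omega
      · by_cases hc2 : (i : ℕ) ≤ p
        · have b1 : x.1.1 j ≤ x.1.1 ⟨p + 1, hpk⟩ := x.1.2 (by simp [Fin.le_def]; omega)
          have b2 : x.1.1 ⟨p, by omega⟩ ≤ x.1.1 i := x.1.2 (by simp [Fin.le_def]; omega)
          simp only [if_neg hc1, if_pos hc2]
          omega
        · simp only [if_neg hc1, if_neg hc2]
          omega⟩
  left_inv m := by
    apply Subtype.ext; funext j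
    dsimp only
    split_ifs <;> omega
  right_inv x := by
    apply Subtype.ext; apply Subtype.ext; funext j
    dsimp only
    have h3 : x.1.1 ⟨p + 1, hpk⟩ < x.1.1 ⟨p, by omega⟩ := x.2
    by_cases hc1 : (j : ℕ) ≤ p
    · have b2 : x.1.1 ⟨p, by omega⟩ ≤ x.1.1 j := x.1.2 (by simp [Fin.le_def]; omega)
      simp only [if_pos hc1]
      omega
    · simp only [if_neg hc1]
      omega

/-- Collapsing a repeated chain point: antitone tuples of length `a + b` correspond to
antitone tuples of length `a + b + 1` with equal values at positions `a` and `a + 1`. -/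
def collapseEquiv (a b : ℕ) (hb : 0 < b) :
    {m : Fin (a + b) → ℕ // Antitone m} ≃
      {x : {m : Fin (a + b + 1) → ℕ // Antitone m} //
        ¬ x.1 ⟨a + 1, by omega⟩ < x.1 ⟨a, by omega⟩} where
  toFun n := ⟨⟨fun j => n.1 ⟨if (j : ℕ) ≤ a then (j : ℕ) else (j : ℕ) - 1, by
        have := j.2; split_ifs <;> omega⟩, by
      intro i j hij
      have h2 : (i : ℕ) ≤ (j : ℕ) := hij
      apply n.2
      simp only [Fin.mk_le_mk]
      split_ifs <;> omega⟩, by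
      dsimp only
      have h : (⟨if a + 1 ≤ a then a + 1 else a + 1 - 1, by split_ifs <;> omega⟩ : Fin (a + b))
          = ⟨if a ≤ a then a else a - 1, by split_ifs <;> omega⟩ := by
        apply Fin.eq_of_val_eq; simp
      rw [h]
      exact lt_irrefl _⟩
  invFun x := ⟨fun i => x.1.1 ⟨if (i : ℕ) < a then (i : ℕ) else (i : ℕ) + 1, by
        have := i.2; split_ifs <;> omega⟩, by
      intro i j hij
      have h2 : (i : ℕ) ≤ (j : ℕ) := hij
      apply x.1.2
      simp only [Fin.mk_le_mk]
      split_ifs <;> omega⟩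
  left_inv n := by
    apply Subtype.ext; funext i
    dsimp only
    apply congrArg
    apply Fin.eq_of_val_eq
    dsimp only
    split_ifs <;> omega
  right_inv x := by
    apply Subtype.ext; apply Subtype.ext; funext j
    dsimp only
    have hx : x.1.1 ⟨a + 1, by omega⟩ = x.1.1 ⟨a, by omega⟩ :=
      le_antisymm (x.1.2 (by simp [Fin.le_def])) (not_lt.mp x.2)
    by_cases hj : (j : ℕ) = a
    · have h1 : (⟨if (if (j : ℕ) ≤ a then (j : ℕ) else (j : ℕ) - 1) < a
          then (if (j : ℕ) ≤ a then (j : ℕ) else (j : ℕ) - 1)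
          else (if (j : ℕ) ≤ a then (j : ℕ) else (j : ℕ) - 1) + 1, by
            have := j.2; split_ifs <;> omega⟩ : Fin (a + b + 1)) = ⟨a + 1, by omega⟩ := by
        apply Fin.eq_of_val_eq; dsimp only; split_ifs <;> omega
      rw [h1, hx]
      apply congrArg
      apply Fin.eq_of_val_eq; simp [hj]
    · apply congrArg
      apply Fin.eq_of_val_eq
      dsimp only
      split_ifs <;> omega

lemma prod_erase_eq_succAbove {M : Type*} [CommMonoid M] {n : ℕ} (p : Fin (n + 1))
    (f : Fin (n + 1) → M) :
    ∏ j ∈ Finset.univ.erase p, f j = ∏ i : Fin n, f (p.succAbove i) := by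
  refine (Finset.prod_bij (fun (i : Fin n) _ => p.succAbove i) ?_ ?_ ?_ ?_).symm
  · intro i _
    exact Finset.mem_erase.mpr ⟨Fin.succAbove_ne p i, Finset.mem_univ _⟩
  · intro a _ b _ h
    exact Fin.succAbove_right_injective h
  · intro j hj
    obtain ⟨i, hi⟩ := Fin.exists_succAbove_eq (Finset.mem_erase.mp hj).1
    exact ⟨i, Finset.mem_univ _, hi⟩
  · intro i _
    rfl

set_option maxHeartbeats 1600000 in
/-- **Lemma 4.6 of the paper**: for an admissible word `w = w_1 e_{AD} w_2`,
`f(w_1 e_{AD} w_2) = f(w_1 e_{AB} w_2) + f(w_1 e_{BD} w_2) + f(w_1 w_2)`. -/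
theorem fword_erase_AD (w1 w2 : List Letter)
    (hadm : AdmissibleWord (w1 ++ Letter.AD :: w2)) :
    fword (w1 ++ Letter.AD :: w2)
      = fword (w1 ++ Letter.AB :: w2) + fword (w1 ++ Letter.BD :: w2)
        + fword (w1 ++ w2) := by
  obtain ⟨hhead, hlast⟩ := hadm
  have hw1 : w1 ≠ [] := by
    rintro rfl
    exact hhead Letter.AD rfl (by simp)
  have hw2 : w2 ≠ [] := by
    rintro rfl
    refine hlast Letter.AD ?_ (by simp)
    show (w1 ++ [Letter.AD]).getLast? = some Letter.AD
    simp
  have hk1 : 0 < w1.length := List.length_pos_iff.mpr hw1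
  have hk2 : 0 < w2.length := List.length_pos_iff.mpr hw2
  have hc0 : w1[0]'hk1 ∉ [Letter.AB, Letter.AC, Letter.AD] := by
    apply hhead
    cases w1 with
    | nil => exact absurd rfl hw1
    | cons a t => rfl
  set k : ℕ := w1.length + w2.length + 1 with hk
  have lenAD : (w1 ++ Letter.AD :: w2).length = k := by simp [hk]; omega
  have lenAB : (w1 ++ Letter.AB :: w2).length = k := by simp [hk]; omega
  have lenBD : (w1 ++ Letter.BD :: w2).length = k := by simp [hk]; omega
  have lenE : (w1 ++ w2).length = w1.length + w2.length := by simp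
  have cp0 : ∀ x : Letter, x.isUpper = false →
      (x :: w2).countP Letter.isUpper = w2.countP Letter.isUpper := by
    intro x hx; simp [List.countP_cons, hx]
  have cpAB : (Letter.AB :: w2).countP Letter.isUpper = w2.countP Letter.isUpper + 1 := by
    simp [List.countP_cons, Letter.isUpper]
  have L1 : ∀ (x : Letter), x.isUpper = false → ∀ j : ℕ,
      dsh (w1 ++ x :: w2) j = dsh (w1 ++ Letter.AD :: w2) j := by
    intro x hx j
    unfold dsh
    rcases le_or_gt j w1.length with h | h
    · rw [List.drop_append_of_le_length h, List.drop_append_of_le_length h,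
        List.countP_append, List.countP_append, cp0 x hx, cp0 Letter.AD rfl]
    · obtain ⟨i, rfl⟩ : ∃ i, j = w1.length + (i + 1) := ⟨j - w1.length - 1, by omega⟩
      rw [List.drop_length_add_append, List.drop_length_add_append, List.drop_succ_cons, List.drop_succ_cons]
  have L2 : ∀ j : ℕ, dsh (w1 ++ Letter.AB :: w2) j
      = dsh (w1 ++ Letter.AD :: w2) j + (if j ≤ w1.length then 1 else 0) := by
    intro j
    unfold dsh
    rcases le_or_gt j w1.length with h | h
    · rw [if_pos h, List.drop_append_of_le_length h, List.drop_append_of_le_length h,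
        List.countP_append, List.countP_append, cpAB, cp0 Letter.AD rfl]
      omega
    · rw [if_neg (by omega)]
      obtain ⟨i, rfl⟩ : ∃ i, j = w1.length + (i + 1) := ⟨j - w1.length - 1, by omega⟩
      rw [List.drop_length_add_append, List.drop_length_add_append, List.drop_succ_cons, List.drop_succ_cons]
      omega
  have L3 : ∀ j : ℕ, j ≤ w1.length →
      dsh (w1 ++ w2) j = dsh (w1 ++ Letter.AD :: w2) j := by
    intro j h
    unfold dsh
    rw [List.drop_append_of_le_length h, List.drop_append_of_le_length h,
      List.countP_append, List.countP_append, cp0 Letter.AD rfl]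
  have L4 : ∀ i : ℕ, dsh (w1 ++ w2) (w1.length + i)
      = dsh (w1 ++ Letter.AD :: w2) (w1.length + 1 + i) := by
    intro i
    unfold dsh
    have h1 : w1.length + 1 + i = w1.length + (i + 1) := by omega
    rw [h1, List.drop_length_add_append, List.drop_length_add_append, List.drop_succ_cons]
  have G1 : ∀ (l : List Letter) (jv : ℕ) (hj : jv < w1.length)
      {h2 : jv < (w1 ++ l).length}, (w1 ++ l)[jv] = w1[jv] := by
    intro l jv hj h2
    exact List.getElem_append_left hj
  have G2 : ∀ (x : Letter) {h2 : w1.length < (w1 ++ x :: w2).length},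
      (w1 ++ x :: w2)[w1.length] = x := by
    intro x h2
    rw [List.getElem_append_right (le_refl w1.length)]
    simp
  have G3 : ∀ (x : Letter) (i : ℕ) (hi : i < w2.length)
      {h2 : w1.length + 1 + i < (w1 ++ x :: w2).length},
      (w1 ++ x :: w2)[w1.length + 1 + i] = w2[i] := by
    intro x i hi h2
    rw [List.getElem_append_right (by omega)]
    have h3 : w1.length + 1 + i - w1.length = i + 1 := by omega
    simp only [h3, List.getElem_cons_succ]
  have G4 : ∀ (i : ℕ) (hi : i < w2.length)
      {h2 : w1.length + i < (w1 ++ w2).length},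
      (w1 ++ w2)[w1.length + i] = w2[i] := by
    intro i hi h2
    rw [List.getElem_append_right (by omega)]
    simp only [show w1.length + i - w1.length = i from by omega]
  have GNE : ∀ (x y : Letter) (jv : ℕ) (hne : jv ≠ w1.length) (hlt : jv < k)
      {h1 : jv < (w1 ++ x :: w2).length} {h2 : jv < (w1 ++ y :: w2).length},
      (w1 ++ x :: w2)[jv] = (w1 ++ y :: w2)[jv] := by
    intro x y jv hne hlt h1 h2
    rcases Nat.lt_or_ge jv w1.length with h | h
    · rw [G1 _ _ h, G1 _ _ h]
    · obtain ⟨i, rfl⟩ : ∃ i, jv = w1.length + 1 + i := ⟨jv - w1.length - 1, by omega⟩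
      rw [G3 x i (by omega), G3 y i (by omega)]
  have hpk : w1.length < k := by omega
  have hqk : w1.length + 1 < k := by omega
  set p : Fin k := ⟨w1.length, hpk⟩ with hp
  set q1 : Fin k := ⟨w1.length + 1, hqk⟩ with hq1
  set R : {m : Fin k → ℕ // Antitone m} → PowerSeries ℚ := fun m =>
    ∏ j ∈ Finset.univ.erase p,
      lfactor ((w1 ++ Letter.AD :: w2)[(j : ℕ)]'(lt_of_lt_of_le j.2 lenAD.ge))
        (m.1 j + dsh (w1 ++ Letter.AD :: w2) (j : ℕ)) with hR
  -- summability
  have key : ∀ (l : List Letter) (hl : (w1 ++ l).length = k),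
      Summable (fun m : {m : Fin k → ℕ // Antitone m} => termN (w1 ++ l) k hl m.1) := by
    intro l hl
    apply summable_aux (show 0 < k by omega) id Function.injective_id
    intro m
    unfold termN
    refine dvd_trans ?_
      (Finset.dvd_prod_of_mem _ (Finset.mem_univ (⟨0, by omega⟩ : Fin k)))
    rw [G1 l 0 hk1]
    exact dvd_trans (pow_dvd_pow _ (Nat.le_add_right _ _)) (X_pow_dvd_lfactor hc0 _)
  have hk0 : 0 < k := by omega
  have hdvd : ∀ m : {m : Fin k → ℕ // Antitone m},
      (PowerSeries.X : PowerSeries ℚ) ^ (m.1 ⟨0, hk0⟩) ∣ R m := by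
    intro m
    simp only [hR]
    have h0p : (⟨0, hk0⟩ : Fin k) ≠ p := by
      simp only [hp, ne_eq, Fin.mk.injEq]
      omega
    refine dvd_trans ?_
      (Finset.dvd_prod_of_mem _ (Finset.mem_erase.mpr ⟨h0p, Finset.mem_univ _⟩))
    rw [G1 (Letter.AD :: w2) 0 hk1]
    exact dvd_trans (pow_dvd_pow _ (Nat.le_add_right _ _)) (X_pow_dvd_lfactor hc0 _)
  have hRsum : Summable R := summable_aux hk0 id Function.injective_id R hdvd
  -- pointwise splitting of the AD factor
  have split1 : ∀ m : {m : Fin k → ℕ // Antitone m},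
      termN (w1 ++ Letter.AD :: w2) k lenAD m.1
        = R m + termN (w1 ++ Letter.BD :: w2) k lenBD m.1 := by
    intro m
    have eAD : termN (w1 ++ Letter.AD :: w2) k lenAD m.1
        = lfactor Letter.AD (m.1 p + dsh (w1 ++ Letter.AD :: w2) w1.length) * R m := by
      unfold termN
      rw [← Finset.mul_prod_erase Finset.univ _ (Finset.mem_univ p), hR]
      simp only [show ((p : Fin k) : ℕ) = w1.length from rfl]
      rw [G2]
    have eBD : termN (w1 ++ Letter.BD :: w2) k lenBD m.1
        = lfactor Letter.BD (m.1 p + dsh (w1 ++ Letter.AD :: w2) w1.length) * R m := by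
      unfold termN
      rw [← Finset.mul_prod_erase Finset.univ _ (Finset.mem_univ p), hR]
      simp only [show ((p : Fin k) : ℕ) = w1.length from rfl]
      rw [G2, L1 Letter.BD rfl]
      congr 1
      apply Finset.prod_congr rfl
      intro j hj
      have hjne : (j : ℕ) ≠ w1.length := by
        have h5 := (Finset.mem_erase.mp hj).1
        simpa [hp, Fin.ne_iff_vne] using h5
      rw [GNE Letter.BD Letter.AD (j : ℕ) hjne j.2, L1 Letter.BD rfl]
    rw [eAD, eBD]
    have hADBD : lfactor Letter.AD (m.1 p + dsh (w1 ++ Letter.AD :: w2) w1.length)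
        = 1 + lfactor Letter.BD (m.1 p + dsh (w1 ++ Letter.AD :: w2) w1.length) := rfl
    rw [hADBD]
    ring
  -- rewrite the four fwords
  rw [fword_eq _ k lenAD, fword_eq _ k lenAB, fword_eq _ k lenBD,
    fword_eq _ (w1.length + w2.length) lenE]
  -- the set of strict chains at p
  set s : Set {m : Fin k → ℕ // Antitone m} := {m | m.1 q1 < m.1 p} with hs
  -- AB-sum equals the strict part
  have sumAB : (∑' m : {m : Fin k → ℕ // Antitone m}, termN (w1 ++ Letter.AB :: w2) k lenAB m.1)
      = ∑' x : ↥s, R ↑x := by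
    let e1 : {m : Fin k → ℕ // Antitone m} ≃ ↥s :=
      (shiftEquiv k w1.length hqk).trans (Equiv.subtypeEquivRight fun x => Iff.rfl)
    rw [← Equiv.tsum_eq e1 (fun x : ↥s => R ↑x)]
    apply tsum_congr
    intro m
    show termN (w1 ++ Letter.AB :: w2) k lenAB m.1 = R ((e1 m) : {m : Fin k → ℕ // Antitone m})
    have he1 : ((e1 m) : {m : Fin k → ℕ // Antitone m}).1
        = fun j => m.1 j + (if (j : ℕ) ≤ w1.length then 1 else 0) := rfl
    unfold termN
    simp only [hR, he1]
    rw [← Finset.mul_prod_erase Finset.univ _ (Finset.mem_univ p)]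
    simp only [show ((p : Fin k) : ℕ) = w1.length from rfl]
    rw [G2]
    rw [show lfactor Letter.AB (m.1 p + dsh (w1 ++ Letter.AB :: w2) w1.length) = 1 from rfl,
      one_mul]
    apply Finset.prod_congr rfl
    intro j hj
    have hjne : (j : ℕ) ≠ w1.length := by
      have h5 := (Finset.mem_erase.mp hj).1
      simpa [hp, Fin.ne_iff_vne] using h5
    rw [GNE Letter.AB Letter.AD (j : ℕ) hjne j.2, L2 (j : ℕ)]
    · congr 1
      ring
    · exact lt_of_lt_of_le j.2 lenAD.ge
  -- E-sum equals the equal part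
  have sumE : (∑' m : {m : Fin (w1.length + w2.length) → ℕ // Antitone m},
        termN (w1 ++ w2) (w1.length + w2.length) lenE m.1)
      = ∑' x : ↥sᶜ, R ↑x := by
    let e2 : {m : Fin (w1.length + w2.length) → ℕ // Antitone m} ≃ ↥sᶜ :=
      (collapseEquiv w1.length w2.length hk2).trans (Equiv.subtypeEquivRight fun x => Iff.rfl)
    rw [← Equiv.tsum_eq e2 (fun x : ↥sᶜ => R ↑x)]
    apply tsum_congr
    intro n
    show termN (w1 ++ w2) (w1.length + w2.length) lenE n.1
        = R ((e2 n) : {m : Fin k → ℕ // Antitone m})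
    simp only [hR]
    rw [prod_erase_eq_succAbove p]
    unfold termN
    apply Finset.prod_congr rfl
    intro i _
    have hpv : ((p : Fin k) : ℕ) = w1.length := rfl
    rcases Nat.lt_or_ge (i : ℕ) w1.length with h | h
    · have hcond : i.castSucc < p := by
        rw [Fin.lt_def]
        show (i : ℕ) < (p : ℕ)
        omega
      have hv : ((p.succAbove i : Fin k) : ℕ) = (i : ℕ) := by
        rw [Fin.succAbove_of_castSucc_lt p i hcond]
        rfl
      have hev : ((e2 n) : {m : Fin k → ℕ // Antitone m}).1 (p.succAbove i) = n.1 i := by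
        show n.1 _ = n.1 i
        apply congrArg
        apply Fin.eq_of_val_eq
        show (if ((p.succAbove i : Fin k) : ℕ) ≤ w1.length
            then ((p.succAbove i : Fin k) : ℕ) else ((p.succAbove i : Fin k) : ℕ) - 1) = (i : ℕ)
        rw [hv, if_pos (by omega)]
      rw [hev]
      simp only [hv]
      rw [G1 w2 (i : ℕ) h, G1 (Letter.AD :: w2) (i : ℕ) h, L3 (i : ℕ) (by omega)]
    · obtain ⟨c, hc⟩ : ∃ c, (i : ℕ) = w1.length + c := ⟨(i : ℕ) - w1.length, by omega⟩
      have hcw : c < w2.length := by have := i.2; omega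
      have hcond : p ≤ i.castSucc := by
        rw [Fin.le_def]
        show (p : ℕ) ≤ (i : ℕ)
        omega
      have hv : ((p.succAbove i : Fin k) : ℕ) = (i : ℕ) + 1 := by
        rw [Fin.succAbove_of_le_castSucc p i hcond]
        rfl
      have hev : ((e2 n) : {m : Fin k → ℕ // Antitone m}).1 (p.succAbove i) = n.1 i := by
        show n.1 _ = n.1 i
        apply congrArg
        apply Fin.eq_of_val_eq
        show (if ((p.succAbove i : Fin k) : ℕ) ≤ w1.length
            then ((p.succAbove i : Fin k) : ℕ) else ((p.succAbove i : Fin k) : ℕ) - 1) = (i : ℕ)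
        rw [hv, if_neg (by omega)]
        omega
      rw [hev]
      simp only [hv]
      simp only [show (i : ℕ) + 1 = w1.length + 1 + c from by omega]
      simp only [show (i : ℕ) = w1.length + c from hc]
      rw [G4 c hcw, G3 Letter.AD c hcw, L4 c]
  -- assemble
  have hBDsum := key (Letter.BD :: w2) lenBD
  calc (∑' m : {m : Fin k → ℕ // Antitone m}, termN (w1 ++ Letter.AD :: w2) k lenAD m.1)
      = ∑' m : {m : Fin k → ℕ // Antitone m},
          (R m + termN (w1 ++ Letter.BD :: w2) k lenBD m.1) := tsum_congr split1
    _ = (∑' m, R m) + ∑' m : {m : Fin k → ℕ // Antitone m},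
          termN (w1 ++ Letter.BD :: w2) k lenBD m.1 := Summable.tsum_add hRsum hBDsum
    _ = ((∑' x : ↥s, R ↑x) + ∑' x : ↥sᶜ, R ↑x) + ∑' m : {m : Fin k → ℕ // Antitone m},
          termN (w1 ++ Letter.BD :: w2) k lenBD m.1 := by
        have hRs : Summable (fun x : ↥s => R ↑x) :=
          summable_aux hk0 Subtype.val Subtype.val_injective _ (fun x => hdvd x.1)
        have hRsc : Summable (fun x : ↥sᶜ => R ↑x) :=
          summable_aux hk0 Subtype.val Subtype.val_injective _ (fun x => hdvd x.1)
        rw [Summable.tsum_add_tsum_compl (f := R) hRs hRsc]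
    _ = _ := by rw [sumAB, sumE]; ring
end
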